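/- Let z = |z| e^{iω} with 1/2 ≤ |z| < 1. Then for all real θ, φ, |P_z(θ) - P_z(φ)| ≤ 2 (|θ-ω| + |φ-ω|) |θ-φ| / (1-|z|)³, where P_z is the Poisson kernel. -/

import Mathlib

open MeasureTheory Set

noncomputable section

def unitDisk : Set ℂ := {z : ℂ | ‖z‖ < 1}

def carlesonSquare (a b : ℝ) : Set ℂ :=
  {z : ℂ | ∃ r t : ℝ, a ≤ t ∧ t ≤ b ∧ 1 - (b - a) / (2 * Real.pi) ≤ r ∧ r < 1 ∧
    z = (r : ℂ) * Complex.exp (t * Complex.I)}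

/-- `μ` is an `s`-Carleson measure. -/
def IsCarleson (μ : Measure ℂ) (s : ℝ) : Prop :=
  ∃ C > 0, ∀ a b : ℝ, a < b → b - a ≤ 2 * Real.pi →
    (μ (carlesonSquare a b)).toReal ≤ C * (b - a) ^ s

/-- Poisson kernel `P_z(θ)`. -/
def diskPoissonKernel (z : ℂ) (θ : ℝ) : ℝ :=
  (1 - ‖z‖ ^ 2) / ‖1 - z * Complex.exp (-(θ * Complex.I))‖ ^ 2

/-- The balayage `S_μ(e^{it})`. -/
def balayage (μ : Measure ℂ) (t : ℝ) : ℝ :=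
  ∫ z in unitDisk, diskPoissonKernel z t ∂μ

/-- The hyperbolic metric `β(z,w)`. -/
def hypDist (z w : ℂ) : ℝ :=
  (1 / 2) * Real.log ((1 + ‖(z - w) / (1 - (starRingEnd ℂ) z * w)‖) /
    (1 - ‖(z - w) / (1 - (starRingEnd ℂ) z * w)‖))

/-- Normalized area measure `dA` on `ℂ` (so that the unit disk has measure 1). -/
def areaM : Measure ℂ := (ENNReal.ofReal Real.pi)⁻¹ • MeasureTheory.volume

/-- The B-balayage `G_μ`. -/
def bBalayage (μ : Measure ℂ) (z : ℂ) : ℝ :=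
  ∫ w in unitDisk, (1 - ‖w‖ ^ 2) ^ 2 /
    ‖1 - (starRingEnd ℂ) z * w‖ ^ 4 ∂μ

lemma sin_lip (a b : ℝ) : |Real.sin a - Real.sin b| ≤ |a - b| := by
  rw [Real.sin_sub_sin, abs_mul, abs_mul]
  have h1 : |Real.sin ((a-b)/2)| ≤ |(a-b)/2| := Real.abs_sin_le_abs
  have h2 : |Real.cos ((a+b)/2)| ≤ 1 := Real.abs_cos_le_one _
  have h3 : |(a-b)/2| = |a-b|/2 := by rw [abs_div]; simp
  have h4 : |(2:ℝ)| = 2 := abs_two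
  rw [h4]
  nlinarith [abs_nonneg (Real.sin ((a-b)/2)), abs_nonneg ((a-b)/2), abs_nonneg (Real.cos ((a+b)/2))]

lemma D_eq (r ω θ : ℝ) :
    ‖1 - (r:ℂ) * Complex.exp (ω*Complex.I) * Complex.exp (-(θ*Complex.I))‖^2
      = (1-r)^2 + 4*r*(Real.sin ((θ-ω)/2))^2 := by
  have h : (r:ℂ) * Complex.exp (ω*Complex.I) * Complex.exp (-(θ*Complex.I))
      = (r:ℂ) * Complex.exp (((ω-θ:ℝ):ℂ)*Complex.I) := by
    rw [mul_assoc, ← Complex.exp_add]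
    push_cast
    ring_nf
  rw [h, Complex.sq_norm, Complex.exp_mul_I, ← Complex.ofReal_cos, ← Complex.ofReal_sin]
  simp [Complex.normSq_apply, ← Complex.ofReal_sub, Complex.cos_ofReal_re, Complex.sin_ofReal_re, Complex.cos_ofReal_im, Complex.sin_ofReal_im]
  have hs : Real.sin ((θ-ω)/2)^2 = 1/2 - Real.cos (θ-ω) / 2 := by
    have h1 := Real.cos_sq ((θ-ω)/2)
    have h2 := Real.sin_sq_add_cos_sq ((θ-ω)/2)
    have : 2*((θ-ω)/2) = θ-ω := by ring
    rw [this] at h1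
    linarith
  have hc : Real.cos (ω-θ) = Real.cos (θ-ω) := by rw [← Real.cos_neg]; ring_nf
  have hpy := Real.sin_sq_add_cos_sq (ω-θ)
  rw [hs, ← hc]
  linear_combination (r^2) * hpy

set_option maxHeartbeats 1000000 in
/-- For z = r e^{iω} with 1/2 ≤ r < 1,
|P_z(θ) - P_z(φ)| ≤ 2 (|θ-ω| + |φ-ω|) |θ-φ| / (1-r)³. -/
theorem poissonKernel_diff_bound (r ω θ φ : ℝ) (h1 : 1 / 2 ≤ r) (h2 : r < 1) :
    |diskPoissonKernel ((r : ℂ) * Complex.exp (ω * Complex.I)) θ -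
      diskPoissonKernel ((r : ℂ) * Complex.exp (ω * Complex.I)) φ| ≤
      2 * ((|θ - ω| + |φ - ω|) * |θ - φ|) / (1 - r) ^ 3 := by
  have hr0 : (0:ℝ) < r := by linarith
  have hr1 : (0:ℝ) < 1 - r := by linarith
  have habs : ‖(r:ℂ) * Complex.exp (ω*Complex.I)‖ = r := by
    rw [norm_mul, Complex.norm_exp_ofReal_mul_I, Complex.norm_real, Real.norm_eq_abs, abs_of_nonneg hr0.le, mul_one]
  have hP : ∀ t : ℝ, diskPoissonKernel ((r:ℂ) * Complex.exp (ω*Complex.I)) t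
      = (1 - r^2) / ((1-r)^2 + 4*r*(Real.sin ((t-ω)/2))^2) := by
    intro t
    unfold diskPoissonKernel
    rw [habs, D_eq]
  rw [hP θ, hP φ]
  set a := (θ-ω)/2 with ha
  set b := (φ-ω)/2 with hb
  set Dθ := (1-r)^2 + 4*r*(Real.sin a)^2 with hDt
  set Dφ := (1-r)^2 + 4*r*(Real.sin b)^2 with hDf
  clear_value Dθ Dφ
  clear_value a b
  have hDtge : (1-r)^2 ≤ Dθ := by rw [hDt]; nlinarith [sq_nonneg (Real.sin a)]
  have hDfge : (1-r)^2 ≤ Dφ := by rw [hDf]; nlinarith [sq_nonneg (Real.sin b)]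
  have hDtpos : 0 < Dθ := lt_of_lt_of_le (by positivity) hDtge
  have hDfpos : 0 < Dφ := lt_of_lt_of_le (by positivity) hDfge
  have hnum : (1-r^2)/Dθ - (1-r^2)/Dφ = (1-r^2)*(Dφ - Dθ)/(Dθ*Dφ) := by
    field_simp
  rw [hnum, abs_div, abs_mul]
  have h1r : |1 - r^2| = 1 - r^2 := abs_of_nonneg (by nlinarith)
  have hden : |Dθ*Dφ| = Dθ*Dφ := abs_of_pos (mul_pos hDtpos hDfpos)
  rw [h1r, hden]
  -- bound the numerator difference
  have hdiff : |Dφ - Dθ| ≤ 4*r*(|b - a| * (|a| + |b|)) := by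
    have he : Dφ - Dθ = 4*r*((Real.sin b - Real.sin a)*(Real.sin b + Real.sin a)) := by
      rw [hDt, hDf]; ring
    rw [he, abs_mul, abs_mul, abs_mul]
    have h4 : |(4:ℝ)| = 4 := by norm_num
    have hr : |r| = r := abs_of_pos hr0
    rw [h4, hr]
    have hl : |Real.sin b - Real.sin a| ≤ |b - a| := sin_lip b a
    have hp : |Real.sin b + Real.sin a| ≤ |a| + |b| := by
      calc |Real.sin b + Real.sin a| ≤ |Real.sin b| + |Real.sin a| := abs_add_le _ _
        _ ≤ |b| + |a| := add_le_add Real.abs_sin_le_abs Real.abs_sin_le_abs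
        _ = |a| + |b| := by ring
    have := mul_le_mul hl hp (abs_nonneg _) (abs_nonneg _)
    nlinarith [abs_nonneg (Real.sin b - Real.sin a), abs_nonneg (b-a)]
  have hba : |b - a| = |θ - φ|/2 := by
    rw [show b - a = -((θ - φ)/2) by rw [hb, ha]; ring, abs_neg, abs_div]
    simp
  have haa : |a| = |θ - ω|/2 := by rw [ha, abs_div]; simp
  have hbb : |b| = |φ - ω|/2 := by rw [hb, abs_div]; simp
  have hS : (0:ℝ) ≤ |θ-ω| + |φ-ω| := by positivity
  have hT : (0:ℝ) ≤ |θ - φ| := abs_nonneg _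
  calc (1-r^2) * |Dφ - Dθ| / (Dθ*Dφ)
      ≤ (1-r^2) * (4*r*(|b - a| * (|a| + |b|))) / ((1-r)^2*(1-r)^2) := by
        apply div_le_div₀ (mul_nonneg (by nlinarith) (by positivity))
        · apply mul_le_mul_of_nonneg_left hdiff (by nlinarith)
        · positivity
        · exact mul_le_mul hDtge hDfge (by positivity) hDtpos.le
    _ = (1-r^2)*r*((|θ - ω| + |φ - ω|) * |θ - φ|) / (1-r)^4 := by
        rw [hba, haa, hbb]; ring_nf
    _ ≤ 2 * ((|θ - ω| + |φ - ω|) * |θ - φ|) / (1-r)^3 := by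
        rw [div_le_div_iff₀ (by positivity) (by positivity)]
        have hST : 0 ≤ (|θ - ω| + |φ - ω|) * |θ - φ| := mul_nonneg hS hT
        have hkey : (1-r^2)*r ≤ 2*(1-r) := by nlinarith
        have hp3 : (0:ℝ) < (1-r)^3 := by positivity
        calc (1-r^2)*r*((|θ - ω| + |φ - ω|) * |θ - φ|) * (1-r)^3
            ≤ 2*(1-r)*((|θ - ω| + |φ - ω|) * |θ - φ|) * (1-r)^3 := by
              apply mul_le_mul_of_nonneg_right _ hp3.le
              exact mul_le_mul_of_nonneg_right hkey hST
          _ = 2*((|θ - ω| + |φ - ω|) * |θ - φ|) * (1-r)^4 := by ring
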